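/- Let G be a group and H ≤ G a subgroup of finite index. Suppose there exist L ≥ 1, a representation σ of H on ℓ¹ = ℓ¹ℕ uniformly bounded by L, and a cocycle β for σ with sup_{h∈H} ‖β(h)‖ = ∞. Then there exist a representation π of G on ℓ¹ uniformly bounded by L and a cocycle α for π with sup_{g∈G} ‖α(g)‖ = ∞. In other words, if a finite index subgroup of G admits an affine uniformly L-Lipschitz action on ℓ¹ with unbounded orbits, then so does G. -/

import Mathlib

open scoped ENNReal

noncomputable section InducedL1Aux

/-- Membership in `ℓ¹` is summability of norms. -/
lemma memℓp_one_iff' {ι : Type*} (f : ι → ℝ) :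
    Memℓp f 1 ↔ Summable fun i => ‖f i‖ := by
  have h := memℓp_gen_iff (E := fun _ : ι => ℝ) (p := 1) (f := f) (by simp)
  simpa using h

lemma l1_norm_eq {ι : Type*} (f : lp (fun _ : ι => ℝ) 1) : ‖f‖ = ∑' i, ‖f i‖ := by
  have h := lp.norm_eq_tsum_rpow (E := fun _ : ι => ℝ) (p := 1) (by simp) f
  simpa using h

lemma l1_summable_norm {ι : Type*} (f : lp (fun _ : ι => ℝ) 1) :
    Summable fun i => ‖f i‖ :=
  (memℓp_one_iff' _).1 (lp.memℓp f)

lemma summable_comp_equiv {ι κ : Type*} (e : ι ≃ κ) {f : κ → ℝ}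
    (h : Summable f) : Summable fun i => f (e i) :=
  (Equiv.summable_iff e (f := f)).2 h

/-- Transport of `ℓ¹` elements along an equivalence of index types. -/
def l1CongrToFun {ι κ : Type*} (e : ι ≃ κ) (f : lp (fun _ : ι => ℝ) 1) :
    lp (fun _ : κ => ℝ) 1 :=
  ⟨fun k => f (e.symm k),
    (memℓp_one_iff' _).2 (summable_comp_equiv e.symm (l1_summable_norm f))⟩

/-- `ℓ¹` congruence along an equivalence of index types. -/
def l1CongrEquiv {ι κ : Type*} (e : ι ≃ κ) :
    lp (fun _ : ι => ℝ) 1 ≃ₗᵢ[ℝ] lp (fun _ : κ => ℝ) 1 where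
  toFun := l1CongrToFun e
  invFun := l1CongrToFun e.symm
  left_inv f := by ext i; simp [l1CongrToFun]
  right_inv f := by ext k; simp [l1CongrToFun]
  map_add' f g := rfl
  map_smul' c f := rfl
  norm_map' f := by
    show ‖l1CongrToFun e f‖ = ‖f‖
    rw [l1_norm_eq, l1_norm_eq]
    exact e.symm.tsum_eq fun i => ‖(f : ∀ _ : ι, ℝ) i‖

section Blocks

variable {ι : Type*} [Fintype ι]

omit [Fintype ι] in
lemma l1_prod_slice_summable (f : lp (fun _ : ι × ℕ => ℝ) 1) (x : ι) :
    Summable fun i => ‖f (x, i)‖ :=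
  (l1_summable_norm f).prod_factor x

/-- Extract the `x`-th block of an element of `ℓ¹(ι × ℕ)`. -/
def blockProjFun (x : ι) (f : lp (fun _ : ι × ℕ => ℝ) 1) : lp (fun _ : ℕ => ℝ) 1 :=
  ⟨fun i => f (x, i), (memℓp_one_iff' _).2 (l1_prod_slice_summable f x)⟩

omit [Fintype ι] in
@[simp] lemma blockProjFun_apply (x : ι) (f : lp (fun _ : ι × ℕ => ℝ) 1) (i : ℕ) :
    blockProjFun x f i = f (x, i) := rfl

lemma l1_norm_prod (f : lp (fun _ : ι × ℕ => ℝ) 1) :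
    ‖f‖ = ∑ x : ι, ‖blockProjFun x f‖ := by
  rw [l1_norm_eq, Summable.tsum_prod (l1_summable_norm f), tsum_fintype]
  exact Finset.sum_congr rfl fun x _ => (l1_norm_eq (blockProjFun x f)).symm

lemma blockProjFun_norm_le (x : ι) (f : lp (fun _ : ι × ℕ => ℝ) 1) :
    ‖blockProjFun x f‖ ≤ ‖f‖ := by
  rw [l1_norm_prod f]
  exact Finset.single_le_sum (f := fun y => ‖blockProjFun y f‖)
    (fun y _ => norm_nonneg _) (Finset.mem_univ x)

/-- Assemble blocks into an element of `ℓ¹(ι × ℕ)`. -/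
def assembleFun (v : ι → lp (fun _ : ℕ => ℝ) 1) : lp (fun _ : ι × ℕ => ℝ) 1 :=
  ⟨fun p => v p.1 p.2,
    (memℓp_one_iff' _).2 <| (summable_prod_of_nonneg (fun _ => norm_nonneg _)).2
      ⟨fun x => l1_summable_norm (v x), Summable.of_finite⟩⟩

@[simp] lemma assembleFun_apply (v : ι → lp (fun _ : ℕ => ℝ) 1) (p : ι × ℕ) :
    assembleFun v p = v p.1 p.2 := rfl

lemma blockProjFun_assembleFun (x : ι) (v : ι → lp (fun _ : ℕ => ℝ) 1) :
    blockProjFun x (assembleFun v) = v x := by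
  ext i; rfl

lemma assembleFun_norm (v : ι → lp (fun _ : ℕ => ℝ) 1) :
    ‖assembleFun v‖ = ∑ x : ι, ‖v x‖ := by
  rw [l1_norm_prod]
  exact Finset.sum_congr rfl fun x _ => by rw [blockProjFun_assembleFun]

end Blocks

section Induced

variable {G : Type*} [Group G] (H : Subgroup G)

lemma qmk_eq (g : G) (x : G ⧸ H) :
    (QuotientGroup.mk (g * Quotient.out (g⁻¹ • x)) : G ⧸ H) = x := by
  have h1 : (QuotientGroup.mk (g * Quotient.out (g⁻¹ • x)) : G ⧸ H)
      = g • QuotientGroup.mk (Quotient.out (g⁻¹ • x)) := by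
    rw [MulAction.Quotient.smul_mk, smul_eq_mul]
  rw [h1, QuotientGroup.out_eq', smul_smul, mul_inv_cancel, one_smul]

lemma qcoc_mem (g : G) (x : G ⧸ H) :
    (Quotient.out x)⁻¹ * g * Quotient.out (g⁻¹ • x) ∈ H := by
  have h1 : (QuotientGroup.mk (Quotient.out x) : G ⧸ H)
      = QuotientGroup.mk (g * Quotient.out (g⁻¹ • x)) := by
    rw [qmk_eq, QuotientGroup.out_eq']
  have h2 := QuotientGroup.eq.mp h1
  simpa [mul_assoc] using h2

/-- The cocycle `G × G/H → H` associated to the section `Quotient.out`. -/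
def qcoc (g : G) (x : G ⧸ H) : ↥H :=
  ⟨(Quotient.out x)⁻¹ * g * Quotient.out (g⁻¹ • x), qcoc_mem H g x⟩

lemma qcoc_one (x : G ⧸ H) : qcoc H 1 x = 1 := by
  apply Subtype.ext
  simp [qcoc]

lemma qcoc_mul (g h : G) (x : G ⧸ H) :
    qcoc H (g * h) x = qcoc H g x * qcoc H h (g⁻¹ • x) := by
  apply Subtype.ext
  have hsm : (g * h)⁻¹ • x = h⁻¹ • (g⁻¹ • x) := by rw [smul_smul, mul_inv_rev]
  simp only [qcoc, Subgroup.coe_mul, hsm]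
  group

variable [Fintype (G ⧸ H)]
variable (σ : ↥H → (lp (fun _ : ℕ => ℝ) 1 →L[ℝ] lp (fun _ : ℕ => ℝ) 1))

/-- The induced representation, as a linear map. -/
def indT (g : G) :
    lp (fun _ : (G ⧸ H) × ℕ => ℝ) 1 →ₗ[ℝ] lp (fun _ : (G ⧸ H) × ℕ => ℝ) 1 where
  toFun f := assembleFun (fun x => σ (qcoc H g x) (blockProjFun (g⁻¹ • x) f))
  map_add' f₁ f₂ := by
    ext p
    have h : ∀ x : G ⧸ H, blockProjFun x (f₁ + f₂)
        = blockProjFun x f₁ + blockProjFun x f₂ := by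
      intro x; ext i; simp
    simp [h, map_add, lp.coeFn_add]
  map_smul' c f := by
    ext p
    have h : ∀ x : G ⧸ H, blockProjFun x (c • f) = c • blockProjFun x f := by
      intro x; ext i; simp [lp.coeFn_smul]
    simp [h, map_smul, lp.coeFn_smul]

lemma indT_apply (g : G) (f : lp (fun _ : (G ⧸ H) × ℕ => ℝ) 1) :
    indT H σ g f = assembleFun (fun x => σ (qcoc H g x) (blockProjFun (g⁻¹ • x) f)) := rfl

lemma indT_bound {L : ℝ} (hσbdd : ∀ a : ↥H, ‖σ a‖ ≤ L) (g : G)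
    (f : lp (fun _ : (G ⧸ H) × ℕ => ℝ) 1) : ‖indT H σ g f‖ ≤ L * ‖f‖ := by
  rw [indT_apply, assembleFun_norm]
  calc ∑ x : G ⧸ H, ‖σ (qcoc H g x) (blockProjFun (g⁻¹ • x) f)‖
      ≤ ∑ x : G ⧸ H, L * ‖blockProjFun (g⁻¹ • x) f‖ := by
        refine Finset.sum_le_sum fun x _ => ?_
        exact le_trans ((σ (qcoc H g x)).le_opNorm _)
          (mul_le_mul_of_nonneg_right (hσbdd _) (norm_nonneg _))
    _ = L * ∑ x : G ⧸ H, ‖blockProjFun (g⁻¹ • x) f‖ := by rw [Finset.mul_sum]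
    _ = L * ∑ x : G ⧸ H, ‖blockProjFun x f‖ := by
        congr 1
        exact Equiv.sum_comp (MulAction.toPerm (g⁻¹ : G)) fun x => ‖blockProjFun x f‖
    _ = L * ‖f‖ := by rw [← l1_norm_prod]

/-- The induced representation, as a continuous linear map. -/
def indTL (L : ℝ) (hσbdd : ∀ a : ↥H, ‖σ a‖ ≤ L) (g : G) :
    lp (fun _ : (G ⧸ H) × ℕ => ℝ) 1 →L[ℝ] lp (fun _ : (G ⧸ H) × ℕ => ℝ) 1 :=
  LinearMap.mkContinuous (indT H σ g) L (indT_bound H σ hσbdd g)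

variable (L : ℝ) (hσbdd : ∀ a : ↥H, ‖σ a‖ ≤ L)

lemma indTL_apply (g : G) (f : lp (fun _ : (G ⧸ H) × ℕ => ℝ) 1) (p : (G ⧸ H) × ℕ) :
    indTL H σ L hσbdd g f p = σ (qcoc H g p.1) (blockProjFun (g⁻¹ • p.1) f) p.2 := rfl

lemma indTL_norm_le (g : G) (f : lp (fun _ : (G ⧸ H) × ℕ => ℝ) 1) :
    ‖indTL H σ L hσbdd g f‖ ≤ L * ‖f‖ :=
  indT_bound H σ hσbdd g f

lemma blockProj_indTL (g : G) (f : lp (fun _ : (G ⧸ H) × ℕ => ℝ) 1) (x : G ⧸ H) :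
    blockProjFun x (indTL H σ L hσbdd g f)
      = σ (qcoc H g x) (blockProjFun (g⁻¹ • x) f) := by
  ext i; rfl

lemma indTL_one (hσ1 : σ 1 = 1) (f : lp (fun _ : (G ⧸ H) × ℕ => ℝ) 1) :
    indTL H σ L hσbdd 1 f = f := by
  ext p
  rw [indTL_apply, qcoc_one, hσ1]
  simp

lemma indTL_mul (hσmul : ∀ a b : ↥H, σ (a * b) = σ a ∘L σ b) (g h : G)
    (f : lp (fun _ : (G ⧸ H) × ℕ => ℝ) 1) :
    indTL H σ L hσbdd (g * h) f = indTL H σ L hσbdd g (indTL H σ L hσbdd h f) := by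
  ext p
  rw [indTL_apply, indTL_apply, blockProj_indTL, qcoc_mul, hσmul]
  have hsm : (g * h)⁻¹ • p.1 = h⁻¹ • (g⁻¹ • p.1) := by rw [smul_smul, mul_inv_rev]
  rw [hsm]
  rfl

variable (β : ↥H → lp (fun _ : ℕ => ℝ) 1)

/-- The induced cocycle. -/
def indA (g : G) : lp (fun _ : (G ⧸ H) × ℕ => ℝ) 1 :=
  assembleFun (fun x => β (qcoc H g x))

lemma indA_mul (hβ : ∀ a b : ↥H, β (a * b) = β a + σ a (β b)) (g h : G) :
    indA H β (g * h) = indA H β g + indTL H σ L hσbdd g (indA H β h) := by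
  ext p
  have h1 : blockProjFun (g⁻¹ • p.1) (indA H β h) = β (qcoc H h (g⁻¹ • p.1)) :=
    blockProjFun_assembleFun _ _
  have h2 : (indA H β (g * h)) p = β (qcoc H (g * h) p.1) p.2 := rfl
  rw [lp.coeFn_add, Pi.add_apply, h2, indTL_apply, h1, qcoc_mul, hβ]
  simp only [lp.coeFn_add, Pi.add_apply]
  rfl

end Induced

end InducedL1Aux

/-- If a finite index subgroup `H` of a group `G` admits an affine uniformly `L`-Lipschitz
action on `ℓ¹ = ℓ¹ℕ` with unbounded orbits (i.e. a representation on `ℓ¹` uniformly bounded by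
`L` with an unbounded cocycle), then so does `G`. -/
theorem finiteIndex_unbounded_ell1_action_induces {G : Type*} [Group G]
    (H : Subgroup G) [H.FiniteIndex] (L : ℝ) (hL : 1 ≤ L)
    (σ : ↥H → (lp (fun _ : ℕ => ℝ) 1 →L[ℝ] lp (fun _ : ℕ => ℝ) 1))
    (hσ1 : σ 1 = 1) (hσmul : ∀ a b : ↥H, σ (a * b) = σ a ∘L σ b)
    (hσbdd : ∀ a : ↥H, ‖σ a‖ ≤ L)
    (β : ↥H → lp (fun _ : ℕ => ℝ) 1)
    (hβ : ∀ a b : ↥H, β (a * b) = β a + σ a (β b))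
    (hβunb : ∀ M : ℝ, ∃ a : ↥H, M < ‖β a‖) :
    ∃ π : G → (lp (fun _ : ℕ => ℝ) 1 →L[ℝ] lp (fun _ : ℕ => ℝ) 1),
      π 1 = 1 ∧ (∀ g h : G, π (g * h) = π g ∘L π h) ∧ (∀ g : G, ‖π g‖ ≤ L) ∧
      ∃ α : G → lp (fun _ : ℕ => ℝ) 1,
        (∀ g h : G, α (g * h) = α g + π g (α h)) ∧
        (∀ M : ℝ, ∃ g : G, M < ‖α g‖) := by
  classical
  have hL0 : (0 : ℝ) ≤ L := le_trans zero_le_one hL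
  haveI : Finite (G ⧸ H) := H.finite_quotient_of_finiteIndex
  haveI := Fintype.ofFinite (G ⧸ H)
  haveI : Encodable ((G ⧸ H) × ℕ) := Encodable.ofCountable _
  haveI : Denumerable ((G ⧸ H) × ℕ) := Denumerable.ofEncodableOfInfinite _
  let e : (G ⧸ H) × ℕ ≃ ℕ := Denumerable.eqv _
  let Φ : lp (fun _ : (G ⧸ H) × ℕ => ℝ) 1 ≃ₗᵢ[ℝ] lp (fun _ : ℕ => ℝ) 1 :=
    l1CongrEquiv e
  refine ⟨fun g =>
      ((Φ.toLinearIsometry.toContinuousLinearMap.comp (indTL H σ L hσbdd g)).comp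
        Φ.symm.toLinearIsometry.toContinuousLinearMap), ?_, ?_, ?_,
    fun g => Φ (indA H β g), ?_, ?_⟩
  · ext v
    simp [indTL_one H σ L hσbdd hσ1]
  · intro g h
    ext v
    simp [indTL_mul H σ L hσbdd hσmul]
  · intro g
    refine ContinuousLinearMap.opNorm_le_bound _ hL0 fun v => ?_
    have h2 : ‖(Φ.symm v : lp (fun _ : (G ⧸ H) × ℕ => ℝ) 1)‖ = ‖v‖ := Φ.symm.norm_map v
    show ‖Φ (indTL H σ L hσbdd g (Φ.symm v))‖ ≤ L * ‖v‖
    calc ‖Φ (indTL H σ L hσbdd g (Φ.symm v))‖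
        = ‖indTL H σ L hσbdd g (Φ.symm v)‖ := Φ.norm_map _
      _ ≤ L * ‖(Φ.symm v : lp (fun _ : (G ⧸ H) × ℕ => ℝ) 1)‖ :=
        indTL_norm_le H σ L hσbdd g _
      _ = L * ‖v‖ := by rw [h2]
  · intro g h
    show Φ (indA H β (g * h))
      = Φ (indA H β g) + Φ (indTL H σ L hσbdd g (Φ.symm (Φ (indA H β h))))
    rw [Φ.symm_apply_apply, indA_mul H σ L hσbdd β hβ, map_add]
  · intro M
    obtain ⟨a, ha⟩ := hβunb M
    set x0 : G ⧸ H := QuotientGroup.mk (1 : G) with hx0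
    set t : G := Quotient.out x0 with htdef
    have htmem : t ∈ H := by
      have h1 : (QuotientGroup.mk t : G ⧸ H) = QuotientGroup.mk (1 : G) := by
        rw [htdef, hx0, QuotientGroup.out_eq']
      have h2 := QuotientGroup.eq.mp h1.symm
      simpa using h2
    set t' : ↥H := ⟨t, htmem⟩ with ht'
    set b : ↥H := t' * a * t'⁻¹ with hb
    refine ⟨(b : G), ?_⟩
    have hfix : ((b : G))⁻¹ • x0 = x0 := by
      rw [hx0, MulAction.Quotient.smul_mk, QuotientGroup.eq]
      simp only [smul_eq_mul, mul_one, mul_inv_rev, inv_inv]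
      exact b.2
    have hq : qcoc H (b : G) x0 = a := by
      apply Subtype.ext
      show (Quotient.out x0)⁻¹ * (b : G) * Quotient.out ((b : G)⁻¹ • x0) = (a : G)
      rw [hfix, ← htdef, hb]
      push_cast
      rw [show (t' : G) = t from rfl]
      group
    have hproj : blockProjFun x0 (indA H β (b : G)) = β a := by
      show blockProjFun x0 (assembleFun _) = β a
      rw [blockProjFun_assembleFun, hq]
    have hge : ‖β a‖ ≤ ‖indA H β (b : G)‖ := by
      rw [← hproj]; exact blockProjFun_norm_le _ _
    have hn : ‖Φ (indA H β (b : G))‖ = ‖indA H β (b : G)‖ := Φ.norm_map _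
    show M < ‖Φ (indA H β (b : G))‖
    rw [hn]
    exact lt_of_lt_of_le ha hge
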